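/- Let λ > 0 and let (p_i)_{i=1}^N ∈ {0,1}^N be a λ-good sequence with p_1 = p_N = 1. Then the number of indices i with p_i = 1 is at least N^{log_{λ+2}(2)}. -/

import Mathlib

/-- A 0-1 sequence `p` on `[1,N]` is `lam`-good: for every proper subinterval `[i,j]` of
`[1,N]` containing a 1, there is a 1 at some `x ∈ [1,N] \ [i,j]` with
`d(x,[i,j]) ≤ lam * |[i,j]| + 1`. -/
def IsLambdaGood (lam : ℝ) (N : ℕ) (p : ℕ → Bool) : Prop :=
  ∀ i j : ℕ, 1 ≤ i → i ≤ j → j ≤ N → ¬(i = 1 ∧ j = N) →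
    (∃ k, i ≤ k ∧ k ≤ j ∧ p k = true) →
    ∃ x, 1 ≤ x ∧ x ≤ N ∧ (x < i ∨ j < x) ∧ p x = true ∧
      ((if x < i then i - x else x - j : ℕ) : ℝ) ≤ lam * ((j - i + 1 : ℕ) : ℝ) + 1


lemma aux_conv {c : ℝ} (hc : 1 ≤ c) {x y u : ℝ} (hx : 0 ≤ x) (hu : 0 ≤ u) (hxy : x ≤ y) :
    (x + u) ^ c - x ^ c ≤ (y + u) ^ c - y ^ c := by
  rcases eq_or_lt_of_le hu with h0 | hu0
  · simp [← h0]
  have hcv : ConvexOn ℝ (Set.Ici (0:ℝ)) fun t : ℝ => t ^ c := convexOn_rpow hc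
  have hy : (0:ℝ) ≤ y := hx.trans hxy
  have hd : y + u - x > 0 := by linarith
  set θ := (y + u - (x + u)) / (y + u - x) with hθ
  have key : θ * (y + u - x) = y - x := by
    rw [hθ]; field_simp; ring
  have hθ0 : 0 ≤ θ := div_nonneg (by linarith) (by linarith)
  have hθ1 : (0:ℝ) ≤ 1 - θ := by
    have : θ ≤ 1 := by rw [hθ, div_le_one hd]; linarith
    linarith
  have hsum : θ * x + (1 - θ) * (y + u) = x + u := by linear_combination -key
  have hsum2 : (1 - θ) * x + θ * (y + u) = y := by linear_combination key
  have h1 : (x + u) ^ c ≤ θ * x ^ c + (1 - θ) * (y + u) ^ c := by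
    have := hcv.2 (Set.mem_Ici.2 hx) (Set.mem_Ici.2 (by linarith : (0:ℝ) ≤ y + u)) hθ0
      hθ1 (by ring)
    simpa [smul_eq_mul, hsum] using this
  have h2 : y ^ c ≤ (1 - θ) * x ^ c + θ * (y + u) ^ c := by
    have := hcv.2 (Set.mem_Ici.2 hx) (Set.mem_Ici.2 (by linarith : (0:ℝ) ≤ y + u))
      hθ1 hθ0 (by ring)
    simpa [smul_eq_mul, hsum2] using this
  nlinarith [h1, h2]

lemma aux_key {c : ℝ} (hc : 1 ≤ c) {u v : ℝ} (hu : 0 ≤ u) (huv : u ≤ v) :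
    v ^ c + ((2:ℝ) ^ c - 1) * u ^ c ≤ (u + v) ^ c := by
  have h := aux_conv hc hu hu huv
  have h2 : (u + u) ^ c = 2 ^ c * u ^ c := by
    rw [show u + u = 2 * u by ring, Real.mul_rpow (by norm_num) hu]
  have hvu : (v + u) = (u + v) := by ring
  rw [h2, hvu] at h
  nlinarith

noncomputable def nxt (p : ℕ → Bool) (a : ℕ) : ℕ := sInf {x | a < x ∧ p x = true}

lemma nxt_mem {p : ℕ → Bool} {a : ℕ} (h : ∃ x, a < x ∧ p x = true) :
    a < nxt p a ∧ p (nxt p a) = true := Nat.sInf_mem h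

lemma nxt_le {p : ℕ → Bool} {a y : ℕ} (hy : a < y) (hpy : p y = true) : nxt p a ≤ y :=
  Nat.sInf_le ⟨hy, hpy⟩

lemma nxt_nogap {p : ℕ → Bool} {a y : ℕ} (h1 : a < y) (h2 : y < nxt p a) : p y = false := by
  by_contra h
  have : p y = true := by simpa using h
  exact absurd (nxt_le h1 this) (by omega)

lemma left_good {lam : ℝ} {N a b : ℕ} {p : ℕ → Bool}
    (hgood : IsLambdaGood lam N p) (hp1 : p 1 = true)
    (ha1 : 1 ≤ a) (hab : a < b) (hbN : b ≤ N) (hpa : p a = true)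
    (hnogap : ∀ y, a < y → y < b → p y = false)
    (hmax : ∀ y z : ℕ, 1 ≤ y → p y = true → y < z → z ≤ N → p z = true →
      (∀ t, y < t → t < z → p t = false) → z - y ≤ b - a) :
    IsLambdaGood lam a p := by
  intro i j hi hij hja hne hex
  have hjN : j ≤ N := by omega
  obtain ⟨x, hx1, hxN, hxout, hpx, hdist⟩ := hgood i j hi hij hjN (by omega) hex
  rcases hxout with hxlt | hxgt
  · exact ⟨x, hx1, by omega, Or.inl hxlt, hpx, hdist⟩
  · rcases le_or_gt x a with hxa | hax
    · exact ⟨x, hx1, hxa, Or.inr hxgt, hpx, hdist⟩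
    · -- x > a, so x ≥ b
      have hxb : b ≤ x := by
        by_contra h
        have := hnogap x hax (by omega)
        rw [this] at hpx; exact absurd hpx (by simp)
      have hdist' : ((x - j : ℕ) : ℝ) ≤ lam * ((j - i + 1 : ℕ) : ℝ) + 1 := by
        rwa [if_neg (by omega)] at hdist
      rcases lt_or_eq_of_le hja with hja' | hjeq
      · -- j < a : use a as witness
        refine ⟨a, ha1, le_refl a, Or.inr hja', hpa, ?_⟩
        rw [if_neg (by omega)]
        refine le_trans ?_ hdist'
        have : (a - j : ℕ) ≤ (x - j : ℕ) := by omega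
        exact_mod_cast this
      · -- j = a, and i > 1
        have hi2 : 2 ≤ i := by omega
        set y := Nat.findGreatest (fun t => p t = true) (i - 1) with hy
        have hy1 : 1 ≤ y := Nat.le_findGreatest (by omega) hp1
        have hpy : p y = true := Nat.findGreatest_spec (P := fun t => p t = true) (n := i - 1) (m := 1) (by omega) hp1
        have hyi : y < i := by
          have := Nat.findGreatest_le (P := fun t => p t = true) (i - 1)
          omega
        have hexz : ∃ t, y < t ∧ p t = true := ⟨a, by omega, hpa⟩
        obtain ⟨hyz, hpz⟩ := nxt_mem hexz
        set z := nxt p y with hz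
        have hzle : z ≤ a := nxt_le (a := y) (by omega) hpa
        have hiz : i ≤ z := by
          by_contra h
          have := Nat.findGreatest_is_greatest (n := i - 1) (P := fun t => p t = true)
            hyz (by omega)
          exact this hpz
        have hgap : z - y ≤ b - a :=
          hmax y z hy1 hpy hyz (by omega) hpz (fun t h1 h2 => nxt_nogap h1 h2)
        refine ⟨y, hy1, by omega, Or.inl hyi, hpy, ?_⟩
        rw [if_pos hyi]
        refine le_trans ?_ hdist'
        have : (i - y : ℕ) ≤ (x - j : ℕ) := by omega
        exact_mod_cast this

lemma right_good {lam : ℝ} {N a b : ℕ} {p : ℕ → Bool}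
    (hgood : IsLambdaGood lam N p) (hpN : p N = true)
    (ha1 : 1 ≤ a) (hab : a < b) (hbN : b ≤ N) (hpb : p b = true)
    (hnogap : ∀ y, a < y → y < b → p y = false)
    (hmax : ∀ y z : ℕ, 1 ≤ y → p y = true → y < z → z ≤ N → p z = true →
      (∀ t, y < t → t < z → p t = false) → z - y ≤ b - a) :
    IsLambdaGood lam (N - b + 1) (fun t => p (t + (b - 1))) := by
  intro i j hi hij hjN' hne hex
  have hb2 : 2 ≤ b := by omega
  set i' := i + (b - 1) with hi'
  set j' := j + (b - 1) with hj'
  have hlen : j' - i' + 1 = j - i + 1 := by omega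
  obtain ⟨k, hk1, hk2, hpk⟩ := hex
  obtain ⟨x, hx1, hxN, hxout, hpx, hdist⟩ := hgood i' j' (by omega) (by omega) (by omega)
    (by omega) ⟨k + (b - 1), by omega, by omega, hpk⟩
  rw [hlen] at hdist
  rcases hxout with hxlt | hxgt
  · -- x < i'
    have hdist' : ((i' - x : ℕ) : ℝ) ≤ lam * ((j - i + 1 : ℕ) : ℝ) + 1 := by
      rwa [if_pos hxlt] at hdist
    rcases le_or_gt b x with hbx | hxb
    · -- x ≥ b : shift back
      refine ⟨x - (b - 1), by omega, by omega, Or.inl (by omega), by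
        simpa [show x - (b-1) + (b-1) = x by omega] using hpx, ?_⟩
      rw [if_pos (by omega)]
      have : (i - (x - (b-1)) : ℕ) = (i' - x : ℕ) := by omega
      rw [this]; exact hdist'
    · -- x < b, so x ≤ a
      have hxa : x ≤ a := by
        by_contra h
        have := hnogap x (by omega) hxb
        rw [this] at hpx; exact absurd hpx (by simp)
      rcases Nat.lt_or_ge 1 i with hi1 | hi1
      · -- i > 1: use b (index 1)
        refine ⟨1, le_refl 1, by omega, Or.inl hi1, by
          simpa [show 1 + (b-1) = b by omega] using hpb, ?_⟩
        rw [if_pos hi1]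
        refine le_trans ?_ hdist'
        have : (i - 1 : ℕ) ≤ (i' - x : ℕ) := by omega
        exact_mod_cast this
      · -- i = 1, then j < N'
        have hieq : i = 1 := by omega
        have hjlt : j < N - b + 1 := by
          rcases lt_or_eq_of_le hjN' with h | h
          · exact h
          · exact absurd ⟨hieq, h⟩ hne
        have hj'N : j' < N := by omega
        set w := Nat.findGreatest (fun t => p t = true) j' with hw
        have hbj' : b ≤ j' := by omega
        have hwb : b ≤ w := Nat.le_findGreatest hbj' hpb
        have hpw : p w = true := Nat.findGreatest_spec (P := fun t => p t = true) (n := j') (m := b) hbj' hpb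
        have hwj' : w ≤ j' := Nat.findGreatest_le _
        have hexz : ∃ t, w < t ∧ p t = true := ⟨N, by omega, hpN⟩
        obtain ⟨hwz, hpz⟩ := nxt_mem hexz
        set z := nxt p w with hz
        have hzN : z ≤ N := nxt_le (by omega) hpN
        have hj'z : j' < z := by
          by_contra h
          have := Nat.findGreatest_is_greatest (n := j') (P := fun t => p t = true)
            hwz (by omega)
          exact this hpz
        have hgap : z - w ≤ b - a :=
          hmax w z (by omega) hpw hwz hzN hpz (fun t h1 h2 => nxt_nogap h1 h2)
        refine ⟨z - (b - 1), by omega, by omega, Or.inr (by omega), by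
          simpa [show z - (b-1) + (b-1) = z by omega] using hpz, ?_⟩
        rw [if_neg (by omega)]
        refine le_trans ?_ hdist'
        have : (z - (b-1) - j : ℕ) ≤ (i' - x : ℕ) := by omega
        exact_mod_cast this
  · -- j' < x : shift back
    have hdist' : ((x - j' : ℕ) : ℝ) ≤ lam * ((j - i + 1 : ℕ) : ℝ) + 1 := by
      rwa [if_neg (by omega)] at hdist
    refine ⟨x - (b - 1), by omega, by omega, Or.inr (by omega), by
      simpa [show x - (b-1) + (b-1) = x by omega] using hpx, ?_⟩
    rw [if_neg (by omega)]
    have : (x - (b-1) - j : ℕ) = (x - j' : ℕ) := by omega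
    rw [this]; exact hdist'

lemma key_bound (lam : ℝ) (hlam : 0 < lam) :
    ∀ N : ℕ, ∀ p : ℕ → Bool, 1 ≤ N → p 1 = true → p N = true → IsLambdaGood lam N p →
      (N : ℝ) ≤ (((Finset.Icc 1 N).filter (fun i => p i = true)).card : ℝ) ^
        Real.logb 2 (lam + 2) := by
  intro N
  induction N using Nat.strong_induction_on with
  | _ N IH =>
  intro p hN hp1 hpN hgood
  set c := Real.logb 2 (lam + 2) with hc
  have h2c : (2:ℝ) ^ c = lam + 2 := Real.rpow_logb (by norm_num) (by norm_num) (by linarith)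
  have hc1 : 1 ≤ c := by
    rw [hc, Real.le_logb_iff_rpow_le (by norm_num) (by linarith)]
    rw [Real.rpow_one]; linarith
  have hc0 : (0:ℝ) ≤ c := by linarith
  have hmono : ∀ s t : ℕ, s ≤ t → (s:ℝ) ^ c ≤ (t:ℝ) ^ c := fun s t h =>
    Real.rpow_le_rpow (by positivity) (by exact_mod_cast h) hc0
  rcases eq_or_lt_of_le hN with h1 | hN2
  · -- N = 1
    have hmem : 1 ∈ (Finset.Icc 1 N).filter (fun i => p i = true) :=
      Finset.mem_filter.2 ⟨Finset.mem_Icc.2 ⟨le_rfl, hN⟩, hp1⟩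
    have hK1 : 1 ≤ ((Finset.Icc 1 N).filter (fun i => p i = true)).card :=
      Finset.card_pos.2 ⟨1, hmem⟩
    have h1c := hmono 1 _ hK1
    rw [Nat.cast_one, Real.one_rpow] at h1c
    calc (N:ℝ) = 1 := by rw [← h1]; norm_num
    _ ≤ _ := h1c
  -- N ≥ 2
  have hTne : (1:ℕ) ∈ (Finset.Icc 1 (N-1)).filter (fun t => p t = true) :=
    Finset.mem_filter.2 ⟨Finset.mem_Icc.2 ⟨le_rfl, by omega⟩, hp1⟩
  obtain ⟨a, haT, hamax⟩ := Finset.exists_max_image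
    ((Finset.Icc 1 (N-1)).filter (fun t => p t = true)) (fun t => nxt p t - t) ⟨1, hTne⟩
  obtain ⟨haI, hpa⟩ := Finset.mem_filter.1 haT
  obtain ⟨ha1, haN1⟩ := Finset.mem_Icc.1 haI
  have hexb : ∃ t, a < t ∧ p t = true := ⟨N, by omega, hpN⟩
  obtain ⟨hab, hpb⟩ := nxt_mem hexb
  set b := nxt p a with hb
  have hbN : b ≤ N := nxt_le (by omega) hpN
  have hnogap : ∀ y, a < y → y < b → p y = false := fun t ht1 ht2 => nxt_nogap ht1 ht2
  have hmaxgap : ∀ y z : ℕ, 1 ≤ y → p y = true → y < z → z ≤ N → p z = true →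
      (∀ t, y < t → t < z → p t = false) → z - y ≤ b - a := by
    intro y z hy1 hpy hyz hzN hpz hnone
    have hnx : nxt p y = z := by
      have hle := nxt_le hyz hpz
      obtain ⟨h1, h2⟩ := nxt_mem ⟨z, hyz, hpz⟩
      rcases lt_or_eq_of_le hle with h | h
      · have := hnone _ h1 h
        rw [this] at h2; simp at h2
      · exact h
    have hyT : y ∈ (Finset.Icc 1 (N-1)).filter (fun t => p t = true) :=
      Finset.mem_filter.2 ⟨Finset.mem_Icc.2 ⟨hy1, by omega⟩, hpy⟩
    have := hamax y hyT
    omega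
  -- gap bounds
  obtain ⟨x1, hx11, hx1N, hx1out, hpx1, hd1⟩ := hgood 1 a le_rfl ha1 (by omega) (by omega)
    ⟨a, ha1, le_rfl, hpa⟩
  have hax1 : a < x1 := by
    rcases hx1out with h | h
    · omega
    · exact h
  have hbx1 : b ≤ x1 := nxt_le hax1 hpx1
  have hgL : ((b - a : ℕ) : ℝ) ≤ lam * (a : ℝ) + 1 := by
    rw [if_neg (by omega)] at hd1
    have he : a - 1 + 1 = a := by omega
    rw [he] at hd1
    have h1 : ((b - a : ℕ):ℝ) ≤ ((x1 - a : ℕ):ℝ) := by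
      exact_mod_cast (by omega : (b - a) ≤ (x1 - a))
    linarith
  set N' := N - b + 1 with hN'
  obtain ⟨x2, hx21, hx2N, hx2out, hpx2, hd2⟩ := hgood b N (by omega) hbN le_rfl (by omega)
    ⟨N, hbN, le_rfl, hpN⟩
  have hx2b : x2 < b := by
    rcases hx2out with h | h
    · exact h
    · omega
  have hx2a : x2 ≤ a := by
    by_contra h
    have := hnogap x2 (by omega) hx2b
    rw [this] at hpx2; simp at hpx2
  have hgR : ((b - a : ℕ):ℝ) ≤ lam * ((N' : ℕ) : ℝ) + 1 := by
    rw [if_pos hx2b] at hd2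
    have h1 : ((b - a : ℕ):ℝ) ≤ ((b - x2 : ℕ):ℝ) := by
      exact_mod_cast (by omega : (b - a) ≤ (b - x2))
    have he : N - b + 1 = N' := rfl
    rw [he] at hd2
    linarith
  -- recursive structure
  set q : ℕ → Bool := fun t => p (t + (b - 1)) with hq
  have hq1 : q 1 = true := by
    rw [hq]; simpa [show 1 + (b-1) = b by omega] using hpb
  have hqN' : q N' = true := by
    rw [hq]; simpa [show N' + (b-1) = N by omega] using hpN
  have hgoodL : IsLambdaGood lam a p :=
    left_good hgood hp1 ha1 hab hbN hpa hnogap hmaxgap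
  have hgoodR : IsLambdaGood lam N' q :=
    right_good hgood hpN ha1 hab hbN hpb hnogap hmaxgap
  have hIHL := IH a (by omega) p ha1 hp1 hpa hgoodL
  have hIHR := IH N' (by omega) q (by omega) hq1 hqN' hgoodR
  set KL := ((Finset.Icc 1 a).filter (fun i => p i = true)).card with hKL
  set KR := ((Finset.Icc 1 N').filter (fun i => q i = true)).card with hKR
  set K := ((Finset.Icc 1 N).filter (fun i => p i = true)).card with hK
  have hKL1 : 1 ≤ KL := Finset.card_pos.2
    ⟨1, Finset.mem_filter.2 ⟨Finset.mem_Icc.2 ⟨le_rfl, ha1⟩, hp1⟩⟩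
  have hKR1 : 1 ≤ KR := Finset.card_pos.2
    ⟨1, Finset.mem_filter.2 ⟨Finset.mem_Icc.2 ⟨le_rfl, by omega⟩, hq1⟩⟩
  -- cardinality split
  have hKRcard : KR = ((Finset.Icc b N).filter (fun i => p i = true)).card := by
    rw [hKR]
    apply Finset.card_bij (fun t _ => t + (b - 1))
    · intro t ht
      simp only [Finset.mem_filter, Finset.mem_Icc] at ht ⊢
      refine ⟨⟨by omega, by omega⟩, ?_⟩
      have := ht.2
      rw [hq] at this
      exact this
    · intro t1 h1 t2 h2 he
      simp only [Finset.mem_filter, Finset.mem_Icc] at h1 h2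
      omega
    · intro x hx
      simp only [Finset.mem_filter, Finset.mem_Icc] at hx
      refine ⟨x - (b - 1), ?_, by omega⟩
      simp only [Finset.mem_filter, Finset.mem_Icc]
      refine ⟨⟨by omega, by omega⟩, ?_⟩
      rw [hq]
      simpa [show x - (b-1) + (b-1) = x by omega] using hx.2
  have hsplit : K = KL + KR := by
    rw [hKRcard, hK, hKL]
    rw [← Finset.card_union_of_disjoint (by
      rw [Finset.disjoint_left]
      intro t ht1 ht2
      simp only [Finset.mem_filter, Finset.mem_Icc] at ht1 ht2
      omega)]
    congr 1
    ext t
    simp only [Finset.mem_filter, Finset.mem_Icc, Finset.mem_union]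
    constructor
    · rintro ⟨⟨h1, h2⟩, hpt⟩
      rcases le_or_gt t a with h | h
      · exact Or.inl ⟨⟨h1, h⟩, hpt⟩
      · refine Or.inr ⟨⟨?_, h2⟩, hpt⟩
        by_contra hbt
        have := hnogap t h (by omega)
        rw [this] at hpt; simp at hpt
    · rintro (⟨⟨h1, h2⟩, hpt⟩ | ⟨⟨h1, h2⟩, hpt⟩)
      · exact ⟨⟨h1, by omega⟩, hpt⟩
      · exact ⟨⟨by omega, h2⟩, hpt⟩
  -- numeric endgame
  have hcastsum : (N:ℝ) + 1 = (a:ℝ) + ((b - a : ℕ):ℝ) + ((N':ℕ):ℝ) := by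
    have : N + 1 = a + (b - a) + N' := by omega
    exact_mod_cast this
  set u := min KL KR with hu
  set v := max KL KR with hv
  have huv : (u:ℝ) ≤ (v:ℝ) := by exact_mod_cast (min_le_max : min KL KR ≤ max KL KR)
  have hu0 : (0:ℝ) ≤ (u:ℝ) := Nat.cast_nonneg u
  have hminle : min (a:ℝ) ((N':ℕ):ℝ) ≤ (u:ℝ) ^ c := by
    rcases le_total KL KR with h | h
    · rw [hu, min_eq_left h]
      exact (min_le_left _ _).trans hIHL
    · rw [hu, min_eq_right h]
      exact (min_le_right _ _).trans hIHR
  have hmaxle : max (a:ℝ) ((N':ℕ):ℝ) ≤ (v:ℝ) ^ c :=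
    max_le (hIHL.trans (hmono KL v (le_max_left _ _)))
      (hIHR.trans (hmono KR v (le_max_right _ _)))
  have hGmin : ((b - a:ℕ):ℝ) - 1 ≤ lam * min (a:ℝ) ((N':ℕ):ℝ) := by
    rcases le_total (a:ℝ) ((N':ℕ):ℝ) with h | h
    · rw [min_eq_left h]; linarith
    · rw [min_eq_right h]; linarith
  have hmm : (a:ℝ) + ((N':ℕ):ℝ) = min (a:ℝ) ((N':ℕ):ℝ) + max (a:ℝ) ((N':ℕ):ℝ) :=
    (min_add_max _ _).symm
  have hlammin : lam * min (a:ℝ) ((N':ℕ):ℝ) ≤ lam * (u:ℝ) ^ c :=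
    mul_le_mul_of_nonneg_left hminle hlam.le
  have step : (N:ℝ) ≤ (v:ℝ) ^ c + (1 + lam) * (u:ℝ) ^ c := by
    have hminn : min (a:ℝ) ((N':ℕ):ℝ) ≤ (u:ℝ) ^ c := hminle
    linarith [hminle, hmaxle, hGmin, hmm, hcastsum, hlammin]
  have hfin : (v:ℝ) ^ c + (1 + lam) * (u:ℝ) ^ c ≤ (K:ℝ) ^ c := by
    have h := aux_key hc1 hu0 huv
    have h2 : (2:ℝ) ^ c - 1 = 1 + lam := by rw [h2c]; ring
    rw [h2] at h
    have huvK : (u:ℝ) + (v:ℝ) = (K:ℝ) := by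
      have : u + v = K := by rw [hsplit]; exact min_add_max KL KR
      exact_mod_cast this
    rw [huvK] at h
    exact h
  exact step.trans hfin

theorem stmt4 (lam : ℝ) (hlam : 0 < lam) (N : ℕ) (hN : 1 ≤ N) (p : ℕ → Bool)
    (h1 : p 1 = true) (hNp : p N = true) (hgood : IsLambdaGood lam N p) :
    (N : ℝ) ^ (Real.logb (lam + 2) 2) ≤
      (((Finset.Icc 1 N).filter (fun i => p i = true)).card : ℝ) := by
  have key := key_bound lam hlam N p hN h1 hNp hgood
  set K := (((Finset.Icc 1 N).filter (fun i => p i = true)).card : ℝ) with hK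
  set c := Real.logb 2 (lam + 2) with hc
  set d := Real.logb (lam + 2) 2 with hd
  have hlog2 : Real.log 2 > 0 := Real.log_pos (by norm_num)
  have hloglam : Real.log (lam + 2) > 0 := Real.log_pos (by linarith)
  have hdc : c * d = 1 := by
    rw [hc, hd, Real.logb, Real.logb]
    field_simp
  have hd0 : 0 ≤ d := by
    rw [hd, Real.logb]
    exact div_nonneg hlog2.le hloglam.le
  have hK0 : (0:ℝ) ≤ K := by rw [hK]; exact Nat.cast_nonneg _
  calc (N:ℝ) ^ d ≤ (K ^ c) ^ d := Real.rpow_le_rpow (Nat.cast_nonneg N) key hd0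
  _ = K ^ (c * d) := (Real.rpow_mul hK0 c d).symm
  _ = K := by rw [hdc, Real.rpow_one]
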